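/- Let m be a positive integer, let X be any subset of the projective space P^m(F_q), and let a := max{ |X ∩ H| : H a hyperplane of P^m(F_q) }. Then |X| ≤ a·q + 1. -/

import Mathlib

/-- The set of points of the projective space `P^{n-1}(F)` at which a (homogeneous)
polynomial `f` in `n` variables vanishes. -/
def projZeros {F : Type*} [Field F] {n : ℕ} (f : MvPolynomial (Fin n) F) :
    Set (Projectivization F (Fin n → F)) :=
  {P | MvPolynomial.eval P.rep f = 0}

/-- A hyperplane in `P^{n-1}(F)` is the vanishing set of a nonzero homogeneous linear
polynomial. -/
def IsHyperplane {F : Type*} [Field F] {n : ℕ}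
    (H : Set (Projectivization F (Fin n → F))) : Prop :=
  ∃ L : MvPolynomial (Fin n) F, L ≠ 0 ∧ L.IsHomogeneous 1 ∧ H = projZeros L

open Finset MvPolynomial

section ZanellaAux

private lemma single_of_sum_eq_one {α : Type*} {d : α →₀ ℕ}
    (hd : (d.sum fun _ k => k) = 1) : ∃ i, d = Finsupp.single i 1 := by
  have h1 : ∀ j ∈ d.support, 1 ≤ d j := fun j hj =>
    Nat.one_le_iff_ne_zero.2 (Finsupp.mem_support_iff.1 hj)
  have hle : d.support.card ≤ 1 := by
    calc d.support.card = ∑ _j ∈ d.support, 1 := by simp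
      _ ≤ ∑ j ∈ d.support, d j := Finset.sum_le_sum h1
      _ = 1 := hd
  have hne : d.support ≠ ∅ := by
    intro h
    rw [Finsupp.sum, h] at hd
    simp at hd
  have hpos := Finset.card_pos.2 (Finset.nonempty_of_ne_empty hne)
  have hcard : d.support.card = 1 := le_antisymm hle hpos
  obtain ⟨a, b, hb, hfd⟩ := Finsupp.card_support_eq_one'.1 hcard
  rw [hfd, Finsupp.sum_single_index rfl] at hd
  exact ⟨a, by rw [hfd, hd]⟩

private lemma support_single {F : Type*} [Field F] {n : ℕ}
    {L : MvPolynomial (Fin n) F} (hL : L.IsHomogeneous 1)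
    {d : Fin n →₀ ℕ} (hd : coeff d L ≠ 0) : ∃ i, d = Finsupp.single i 1 := by
  apply single_of_sum_eq_one
  have h := hL hd
  simpa [Finsupp.weight_apply, Finsupp.sum] using h

/-- Evaluating a homogeneous linear polynomial. -/
private lemma eval_eq_sum_coeff {F : Type*} [Field F] {n : ℕ}
    {L : MvPolynomial (Fin n) F} (hL : L.IsHomogeneous 1) (v : Fin n → F) :
    eval v L = ∑ i, coeff (Finsupp.single i 1) L * v i := by
  classical
  have hsub : L.support ⊆ Finset.univ.image (fun i => Finsupp.single i 1) := by
    intro d hd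
    obtain ⟨i, rfl⟩ := support_single hL (mem_support_iff.1 hd)
    exact mem_image_of_mem _ (mem_univ i)
  conv_lhs => rw [L.as_sum]
  rw [map_sum]
  simp_rw [eval_monomial]
  rw [Finset.sum_subset hsub ?_]
  · rw [Finset.sum_image (fun i _ j _ h => Finsupp.single_left_injective one_ne_zero h)]
    apply Finset.sum_congr rfl
    intro i _
    rw [Finsupp.prod_single_index (by simp), pow_one]
  · intro d _ hd
    rw [notMem_support_iff.1 hd, zero_mul]

/-- The number of solutions of one nontrivial linear equation. -/
private lemma card_ker {F : Type*} [Field F] [Fintype F] {n : ℕ}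
    (w : Fin n → F) (hw : w ≠ 0)
    [DecidablePred fun u : Fin n → F => ∑ i, w i * u i = 0] :
    (Finset.univ.filter fun u : Fin n → F => ∑ i, w i * u i = 0).card * Fintype.card F
      = Fintype.card F ^ n := by
  obtain ⟨j, hj⟩ : ∃ j, w j ≠ 0 := by
    by_contra h; push_neg at h; exact hw (funext h)
  let f : (Fin n → F) →ₗ[F] F :=
    { toFun := fun u => ∑ i, w i * u i,
      map_add' := fun x y => by simp [mul_add, Finset.sum_add_distrib]
      map_smul' := fun r x => by simp [Finset.mul_sum, mul_left_comm] }
  have hfapp : ∀ u, f u = ∑ i, w i * u i := fun u => rfl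
  have hsurj : Function.Surjective f := by
    intro t
    refine ⟨Pi.single j ((w j)⁻¹ * t), ?_⟩
    rw [hfapp, Finset.sum_eq_single j]
    · rw [Pi.single_eq_same]
      field_simp
    · intro i _ hij
      rw [Pi.single_eq_of_ne hij, mul_zero]
    · intro h; exact absurd (mem_univ j) h
  have h1 := AddSubgroup.card_eq_card_quotient_mul_card_addSubgroup f.toAddMonoidHom.ker
  have h2 : Nat.card ((Fin n → F) ⧸ (f.toAddMonoidHom.ker)) = Fintype.card F := by
    rw [Nat.card_congr
      (QuotientAddGroup.quotientKerEquivOfSurjective f.toAddMonoidHom hsurj).toEquiv,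
      Nat.card_eq_fintype_card]
  have h3 : Nat.card f.toAddMonoidHom.ker
      = (Finset.univ.filter fun u : Fin n → F => ∑ i, w i * u i = 0).card := by
    have e2 : ↥f.toAddMonoidHom.ker ≃ {u : Fin n → F // ∑ i, w i * u i = 0} :=
      Equiv.subtypeEquivRight (fun u => by
        rw [AddMonoidHom.mem_ker]
        exact Iff.rfl)
    rw [Nat.card_congr e2, Nat.card_eq_fintype_card, Fintype.card_subtype]
  have h4 : Nat.card (Fin n → F) = Fintype.card F ^ n := by
    rw [Nat.card_eq_fintype_card, Fintype.card_fun, Fintype.card_fin]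
  rw [h2, h3, h4] at h1
  rw [h1, mul_comm]

/-- The set cut out by a vector of coefficients. -/
private def Zset {F : Type*} [Field F] {n : ℕ} (c : Fin n → F) :
    Set (Projectivization F (Fin n → F)) :=
  {P | ∑ i, c i * P.rep i = 0}

private lemma mem_Zset {F : Type*} [Field F] {n : ℕ} (c : Fin n → F)
    (P : Projectivization F (Fin n → F)) : P ∈ Zset c ↔ ∑ i, c i * P.rep i = 0 :=
  Iff.rfl

/-- The vanishing set of a nonzero vector of coefficients is a hyperplane. -/
private lemma isHyperplane_Z {F : Type*} [Field F] {n : ℕ} (c : Fin n → F) (hc : c ≠ 0) :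
    IsHyperplane (Zset c) := by
  classical
  obtain ⟨j, hj⟩ : ∃ j, c j ≠ 0 := by
    by_contra h; push_neg at h; exact hc (funext h)
  refine ⟨∑ i, C (c i) * X i, ?_, ?_, ?_⟩
  · intro h0
    have hcoeff : coeff (Finsupp.single j 1) (∑ i, (C (c i) * X i : MvPolynomial (Fin n) F))
        = c j := by
      rw [coeff_sum]
      simp only [coeff_C_mul, coeff_X']
      rw [Finset.sum_eq_single j]
      · simp
      · intro i _ hij
        rw [if_neg (by simpa [Finsupp.single_left_inj (one_ne_zero (α := ℕ))] using hij),
          mul_zero]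
      · intro h; exact absurd (mem_univ j) h
    rw [h0] at hcoeff
    simp at hcoeff
    exact hj hcoeff.symm
  · exact IsHomogeneous.sum _ _ _ fun i _ => isHomogeneous_C_mul_X _ _
  · ext P
    rw [mem_Zset]
    simp [projZeros, map_sum]

end ZanellaAux

/-- Zanella's lemma: if `X ⊆ P^m(F_q)` and `a` is the maximum of `|X ∩ H|` over all
hyperplanes `H` of `P^m(F_q)`, then `|X| ≤ a⬝q + 1`. -/
theorem stmt_1 {F : Type*} [Field F] [Fintype F] (q : ℕ) (hq : q = Fintype.card F)
    (m : ℕ) (hm : 0 < m) (X : Set (Projectivization F (Fin (m + 1) → F))) (a : ℕ)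
    (ha : IsGreatest {n : ℕ | ∃ H, IsHyperplane H ∧ n = (X ∩ H).ncard} a) :
    X.ncard ≤ a * q + 1 := by
  classical
  have hq2 : 2 ≤ q := by rw [hq]; exact Fintype.one_lt_card
  haveI : Finite (Projectivization F (Fin (m + 1) → F)) := Quotient.finite _
  haveI : Fintype (Projectivization F (Fin (m + 1) → F)) := Fintype.ofFinite _
  -- every hyperplane is of the form `Zset c` for some nonzero `c`
  have hyp_eq : ∀ H : Set (Projectivization F (Fin (m + 1) → F)), IsHyperplane H →
      ∃ c : Fin (m + 1) → F, c ≠ 0 ∧ H = Zset c := by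
    rintro H ⟨L, hL0, hL1, rfl⟩
    refine ⟨fun i => coeff (Finsupp.single i 1) L, ?_, ?_⟩
    · intro h0
      apply hL0
      apply MvPolynomial.ext
      intro d
      rw [coeff_zero]
      by_contra hd
      obtain ⟨i, rfl⟩ := support_single hL1 hd
      exact hd (congrFun h0 i)
    · ext P
      rw [mem_Zset]
      simp only [projZeros, Set.mem_setOf_eq]
      rw [eval_eq_sum_coeff hL1]
  -- the count of `X ∩ Zset c` is at most `a` for nonzero `c`
  have hZa : ∀ c : Fin (m + 1) → F, c ≠ 0 → (X ∩ Zset c).ncard ≤ a :=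
    fun c hc => ha.2 ⟨Zset c, isHyperplane_Z c hc, rfl⟩
  -- `a * (q - 1) ≤ q ^ m - 1`
  have key_a : a * (q - 1) ≤ q ^ m - 1 := by
    obtain ⟨H₀, hH₀, haH₀⟩ := ha.1
    obtain ⟨c₀, hc₀, rfl⟩ := hyp_eq H₀ hH₀
    have haZ : a ≤ (Zset c₀).ncard := by
      rw [haH₀]; exact Set.ncard_le_ncard Set.inter_subset_right (Set.toFinite _)
    set K : Finset (Fin (m + 1) → F) :=
      Finset.univ.filter (fun u : Fin (m + 1) → F => ∑ i, c₀ i * u i = 0) with hK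
    have hKcard : K.card * q = q ^ (m + 1) := by rw [hq]; exact card_ker c₀ hc₀
    set Hf : Finset (Projectivization F (Fin (m + 1) → F)) := Set.toFinset (Zset c₀) with hHf
    have hmap : ∀ p ∈ Hf ×ˢ (Finset.univ : Finset Fˣ),
        ((p.2 : F) • (p.1.rep) : Fin (m + 1) → F) ∈ K.erase 0 := by
      rintro ⟨P, u⟩ hPu
      rw [Finset.mem_product] at hPu
      have hPZ : ∑ i, c₀ i * P.rep i = 0 := by
        have := hPu.1
        rw [hHf, Set.mem_toFinset, mem_Zset] at this
        exact this
      refine Finset.mem_erase.2 ⟨?_, ?_⟩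
      · exact smul_ne_zero (Units.ne_zero u) (Projectivization.rep_nonzero P)
      · rw [hK, Finset.mem_filter]
        refine ⟨mem_univ _, ?_⟩
        have heq : ∑ i, c₀ i * ((u : F) • P.rep) i = (u : F) * ∑ i, c₀ i * P.rep i := by
          rw [Finset.mul_sum]
          exact Finset.sum_congr rfl fun i _ => by
            simp only [Pi.smul_apply, smul_eq_mul]; ring
        rw [heq, hPZ, mul_zero]
    have hinjOn : Set.InjOn
        (fun p : Projectivization F (Fin (m + 1) → F) × Fˣ => ((p.2 : F) • (p.1.rep)))
        ↑(Hf ×ˢ (Finset.univ : Finset Fˣ)) := by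
      rintro ⟨P, u⟩ _ ⟨P', u'⟩ _ h
      dsimp only at h
      have hP : P = P' := by
        rw [← Projectivization.mk_rep P, ← Projectivization.mk_rep P',
          Projectivization.mk_eq_mk_iff']
        refine ⟨(u : F)⁻¹ * (u' : F), ?_⟩
        rw [mul_smul, ← h, ← mul_smul, inv_mul_cancel₀ (Units.ne_zero u), one_smul]
      subst hP
      have hu : (u : F) = (u' : F) := by
        by_contra hne
        have h0 : ((u : F) - (u' : F)) • P.rep = 0 := by
          rw [sub_smul, h, sub_self]
        rcases smul_eq_zero.1 h0 with h' | h'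
        · exact hne (sub_eq_zero.1 h')
        · exact Projectivization.rep_nonzero P h'
      rw [Units.ext hu]
    have hcards : Hf.card * (q - 1) ≤ (K.erase 0).card := by
      have hcle := Finset.card_le_card_of_injOn
        (fun p : Projectivization F (Fin (m + 1) → F) × Fˣ => ((p.2 : F) • (p.1.rep)))
        hmap hinjOn
      rwa [Finset.card_product, Finset.card_univ, Fintype.card_units, ← hq] at hcle
    have hK0 : (0 : Fin (m + 1) → F) ∈ K := by
      rw [hK, Finset.mem_filter]
      exact ⟨mem_univ _, by simp⟩
    have hKerase : (K.erase 0).card = K.card - 1 := Finset.card_erase_of_mem hK0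
    have hZcard : (Zset c₀).ncard = Hf.card := by
      rw [hHf, Set.ncard_eq_toFinset_card']
    have hKq : K.card = q ^ m := by
      have h := hKcard
      rw [pow_succ] at h
      exact Nat.eq_of_mul_eq_mul_right (by omega) h
    calc a * (q - 1) ≤ Hf.card * (q - 1) :=
          Nat.mul_le_mul_right _ (hZcard ▸ haZ)
      _ ≤ (K.erase 0).card := hcards
      _ = q ^ m - 1 := by rw [hKerase, hKq]
  -- the double count
  set Xf : Finset (Projectivization F (Fin (m + 1) → F)) := X.toFinset with hXf
  have hXcard : X.ncard = Xf.card := by rw [hXf, Set.ncard_eq_toFinset_card']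
  -- count over points
  have hcount1 : ∀ P : Projectivization F (Fin (m + 1) → F),
      (Finset.univ.filter fun c : Fin (m + 1) → F =>
        c ≠ 0 ∧ ∑ i, c i * P.rep i = 0).card = q ^ m - 1 := by
    intro P
    have hrep : P.rep ≠ 0 := Projectivization.rep_nonzero P
    set K := Finset.univ.filter (fun c : Fin (m + 1) → F => ∑ i, P.rep i * c i = 0) with hK
    have hKcard : K.card * q = q ^ (m + 1) := by rw [hq]; exact card_ker P.rep hrep
    have hKq : K.card = q ^ m := by
      have h := hKcard
      rw [pow_succ] at h
      exact Nat.eq_of_mul_eq_mul_right (by omega) h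
    have hfe : (Finset.univ.filter fun c : Fin (m + 1) → F =>
        c ≠ 0 ∧ ∑ i, c i * P.rep i = 0) = K.erase 0 := by
      ext c
      rw [Finset.mem_erase, hK, Finset.mem_filter, Finset.mem_filter]
      have hcomm : ∑ i, c i * P.rep i = ∑ i, P.rep i * c i :=
        Finset.sum_congr rfl fun i _ => mul_comm _ _
      rw [hcomm]
      tauto
    have hK0 : (0 : Fin (m + 1) → F) ∈ K := by
      rw [hK, Finset.mem_filter]; exact ⟨mem_univ _, by simp⟩
    rw [hfe, Finset.card_erase_of_mem hK0, hKq]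
  -- count over hyperplanes
  have hcount2 : ∀ c : Fin (m + 1) → F, c ≠ 0 →
      (Xf.filter fun P => ∑ i, c i * P.rep i = 0).card ≤ a := by
    intro c hc
    have hcf : (Xf.filter fun P => ∑ i, c i * P.rep i = 0).card = (X ∩ Zset c).ncard := by
      rw [Set.ncard_eq_toFinset_card']
      congr 1
      ext P
      simp only [Finset.mem_filter, hXf, Set.mem_toFinset, Set.mem_inter_iff, Zset,
        Set.mem_setOf_eq]
      exact (Set.mem_toFinset (s := X ∩ {P | ∑ i, c i * P.rep i = 0})).symm
    rw [hcf]
    exact hZa c hc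
  -- double counting
  have hdouble : Xf.card * (q ^ m - 1)
      ≤ (Fintype.card (Fin (m + 1) → F) - 1) * a := by
    calc Xf.card * (q ^ m - 1)
        = ∑ P ∈ Xf, (Finset.univ.filter
            fun c : Fin (m + 1) → F => c ≠ 0 ∧ ∑ i, c i * P.rep i = 0).card := by
          rw [Finset.sum_congr rfl fun P _ => hcount1 P, Finset.sum_const, smul_eq_mul]
      _ = ∑ P ∈ Xf, ∑ c : Fin (m + 1) → F,
            if c ≠ 0 ∧ ∑ i, c i * P.rep i = 0 then 1 else 0 := by
          simp_rw [Finset.card_filter]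
      _ = ∑ c : Fin (m + 1) → F, ∑ P ∈ Xf,
            if c ≠ 0 ∧ ∑ i, c i * P.rep i = 0 then 1 else 0 :=
          Finset.sum_comm
      _ ≤ ∑ c : Fin (m + 1) → F, if c = 0 then 0 else a := by
          apply Finset.sum_le_sum
          intro c _
          by_cases hc : c = 0
          · simp [hc]
          · rw [if_neg hc]
            have hcc : (∑ P ∈ Xf, if c ≠ 0 ∧ ∑ i, c i * P.rep i = 0 then 1 else 0)
                = (Xf.filter fun P => ∑ i, c i * P.rep i = 0).card := by
              rw [Finset.card_filter]
              exact Finset.sum_congr rfl fun P _ => by simp [hc]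
            rw [hcc]
            exact hcount2 c hc
      _ = (Fintype.card (Fin (m + 1) → F) - 1) * a := by
          rw [← Finset.add_sum_erase _ _ (mem_univ (0 : Fin (m + 1) → F)), if_pos rfl,
            zero_add]
          rw [Finset.sum_congr rfl
            (fun c hc => if_neg (Finset.mem_erase.1 hc).1), Finset.sum_const, smul_eq_mul,
            Finset.card_erase_of_mem (mem_univ _), Finset.card_univ]
  -- final arithmetic
  have hcV : Fintype.card (Fin (m + 1) → F) = q ^ (m + 1) := by
    rw [hq, Fintype.card_fun, Fintype.card_fin]
  rw [hcV, pow_succ] at hdouble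
  have hqm : q ≤ q ^ m := Nat.le_self_pow hm.ne' q
  have h1q : 1 ≤ q ^ m := by omega
  have h1qq : 1 ≤ q ^ m * q := Nat.mul_pos (by omega) (by omega)
  rw [hXcard]
  zify [h1q, h1qq, (by omega : 1 ≤ q)] at hdouble key_a
  have hA2 : (2 : ℤ) ≤ (q : ℤ) ^ m := by exact_mod_cast le_trans hq2 hqm
  have hfinal : (Xf.card : ℤ) ≤ (a : ℤ) * q + 1 := by
    have hpos : (0 : ℤ) < (q : ℤ) ^ m - 1 := by linarith
    have hmul : (Xf.card : ℤ) * ((q : ℤ) ^ m - 1)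
        ≤ ((a : ℤ) * q + 1) * ((q : ℤ) ^ m - 1) := by nlinarith [hdouble, key_a]
    exact le_of_mul_le_mul_right hmul hpos
  exact_mod_cast hfinal
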